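/- arXiv:2111.13335 — 2 statements merged into one kernel-verified Lean document; each statement's English description precedes it below -/
import Mathlib

section
/- Let θ be an irrational real number and let φ be the irrational linear flow on the torus 𝕋² := AddCircle (1:ℝ) × AddCircle (1:ℝ) given by φ t (x, y) = (x + t, y + θ·t) (where t and θ·t are reduced modulo 1). Then φ has time-reversal symmetric limit sets; in fact α(p) = ω(p) = 𝕋² for every point p. -/
open Set Topology

/-- The ω-limit set of a point `x` under a flow `φ`:
`ω(x) := ⋂_{n ∈ ℝ} closure {φ t x | t > n}`. -/
def Flow.omegaSet {S : Type*} [TopologicalSpace S] (φ : Flow ℝ S) (x : S) : Set S :=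
  ⋂ n : ℝ, closure {y | ∃ t : ℝ, n < t ∧ φ t x = y}

/-- The α-limit set of a point `x` under a flow `φ`:
`α(x) := ⋂_{n ∈ ℝ} closure {φ t x | t < n}`. -/
def Flow.alphaSet {S : Type*} [TopologicalSpace S] (φ : Flow ℝ S) (x : S) : Set S :=
  ⋂ n : ℝ, closure {y | ∃ t : ℝ, t < n ∧ φ t x = y}

/-- A set is invariant if it is a union of orbits. -/
def Flow.IsInvariantSet {S : Type*} [TopologicalSpace S] (φ : Flow ℝ S) (A : Set S) : Prop :=
  ∀ x ∈ A, ∀ t : ℝ, φ t x ∈ A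

/-- A point is singular if it is fixed by the flow. -/
def Flow.IsSingularPt {S : Type*} [TopologicalSpace S] (φ : Flow ℝ S) (x : S) : Prop :=
  ∀ t : ℝ, φ t x = x

/-- A point is periodic if it is not singular but is fixed by some positive time map. -/
def Flow.IsPeriodicPt {S : Type*} [TopologicalSpace S] (φ : Flow ℝ S) (x : S) : Prop :=
  ¬ φ.IsSingularPt x ∧ ∃ T : ℝ, 0 < T ∧ φ T x = x

/-- A point is closed if it is singular or periodic. -/
def Flow.IsClosedPt {S : Type*} [TopologicalSpace S] (φ : Flow ℝ S) (x : S) : Prop :=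
  φ.IsSingularPt x ∨ φ.IsPeriodicPt x

/-- A point is recurrent if it belongs to its ω-limit set or to its α-limit set. -/
def Flow.IsRecurrentPt {S : Type*} [TopologicalSpace S] (φ : Flow ℝ S) (x : S) : Prop :=
  x ∈ φ.omegaSet x ∪ φ.alphaSet x

/-- The orbit of a point under a flow. -/
def Flow.flowOrbit {S : Type*} [TopologicalSpace S] (φ : Flow ℝ S) (x : S) : Set S :=
  {y | ∃ t : ℝ, φ t x = y}

/-- A flow has time-reversal symmetric limit sets if `α(x) = ω(x)` for every point `x`. -/
def Flow.HasSymmetricLimitSets {S : Type*} [TopologicalSpace S] (φ : Flow ℝ S) : Prop :=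
  ∀ x : S, φ.alphaSet x = φ.omegaSet x

/-- A limit cycle is a periodic orbit which is the ω-limit or α-limit set of a point
outside of it. -/
def Flow.IsLimitCycle {S : Type*} [TopologicalSpace S] (φ : Flow ℝ S) (γ : Set S) : Prop :=
  (∃ z : S, φ.IsPeriodicPt z ∧ γ = φ.flowOrbit z) ∧
    ∃ y ∉ γ, φ.omegaSet y = γ ∨ φ.alphaSet y = γ

/-- A subset of a topological space is an open annulus if it is open and homeomorphic to
`(0,1) × S¹`. -/
def IsOpenAnnulus {S : Type*} [TopologicalSpace S] (U : Set S) : Prop :=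
  IsOpen U ∧ Nonempty (↥U ≃ₜ (Set.Ioo (0:ℝ) 1 × AddCircle (1:ℝ)))

/-- A subset of a topological space is an open disk if it is open and homeomorphic to
the open unit ball in `ℝ²`. -/
def IsOpenDisk {S : Type*} [TopologicalSpace S] (U : Set S) : Prop :=
  IsOpen U ∧ Nonempty (↥U ≃ₜ ↥(Metric.ball (0 : EuclideanSpace ℝ (Fin 2)) 1))

/-- The torus `𝕋² = ℝ/ℤ × ℝ/ℤ`. -/
abbrev Torus2 : Type := AddCircle (1:ℝ) × AddCircle (1:ℝ)

section AuxIrrFlow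

open Filter



local notation "π" => ((↑) : ℝ → AddCircle (1:ℝ))

private lemma pi_surj : Function.Surjective ((↑) : ℝ → AddCircle (1:ℝ)) :=
  fun q => QuotientAddGroup.mk'_surjective _ q

private lemma dense_zsmul_irr (θ : ℝ) (hθ : Irrational θ) :
    Dense (Set.range fun n : ℤ => n • ((θ : ℝ) : AddCircle (1:ℝ))) := by
  have hS : Dense ((AddSubgroup.closure {1, θ} : AddSubgroup ℝ) : Set ℝ) := by
    rcases AddSubgroup.dense_or_cyclic (AddSubgroup.closure {1, θ}) with h | ⟨a, ha⟩
    · exact h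
    · exfalso
      rw [← AddSubgroup.zmultiples_eq_closure] at ha
      have h1 : (1:ℝ) ∈ AddSubgroup.zmultiples a := by
        rw [← ha]; exact AddSubgroup.subset_closure (by simp)
      have h2 : θ ∈ AddSubgroup.zmultiples a := by
        rw [← ha]; exact AddSubgroup.subset_closure (by simp)
      rw [AddSubgroup.mem_zmultiples_iff] at h1 h2
      obtain ⟨n, hn⟩ := h1
      obtain ⟨m, hm⟩ := h2
      rw [zsmul_eq_mul] at hn hm
      have hn0 : (n:ℝ) ≠ 0 := by
        intro h; rw [h, zero_mul] at hn; exact one_ne_zero hn.symm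
      exact hθ ⟨(m : ℚ) / (n : ℚ), by
        push_cast
        rw [div_eq_iff hn0]
        linear_combination (n:ℝ) * hm - (m:ℝ) * hn⟩
  have hd : Dense (((↑) : ℝ → AddCircle (1:ℝ)) ''
      ((AddSubgroup.closure {1, θ} : AddSubgroup ℝ) : Set ℝ)) :=
    (pi_surj.denseRange).dense_image (AddCircle.continuous_mk' 1) hS
  refine hd.mono ?_
  rintro _ ⟨r, hr, rfl⟩
  have : ∃ m : ℤ, (r : AddCircle (1:ℝ)) = m • ((θ : ℝ) : AddCircle (1:ℝ)) := by
    induction hr using AddSubgroup.closure_induction with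
    | mem x hx =>
      rcases hx with h | h
      · exact ⟨0, by rw [h, zero_zsmul]; exact AddCircle.coe_period (p := (1:ℝ))⟩
      · exact ⟨1, by rw [h, one_zsmul]⟩
    | zero => exact ⟨0, by rw [zero_zsmul]; exact QuotientAddGroup.mk_zero _⟩
    | add x y hx hy ihx ihy =>
      obtain ⟨mx, hmx⟩ := ihx; obtain ⟨my, hmy⟩ := ihy
      exact ⟨mx + my, by rw [AddCircle.coe_add, hmx, hmy, add_zsmul]⟩
    | neg x hx ih =>
      obtain ⟨mx, hmx⟩ := ih
      exact ⟨-mx, by rw [AddCircle.coe_neg, hmx, neg_zsmul]⟩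
  obtain ⟨m, hm⟩ := this
  exact ⟨m, hm.symm⟩

private lemma clusterPt_nsmul (θ : ℝ) (hθ : Irrational θ) (c : AddCircle (1:ℝ)) :
    MapClusterPt c atTop (fun k : ℕ => k • ((θ : ℝ) : AddCircle (1:ℝ))) := by
  haveI : Fact ((0:ℝ) < 1) := ⟨one_pos⟩
  have hc : c ∈ closure (Set.range fun n : ℤ => n • ((θ : ℝ) : AddCircle (1:ℝ))) := by
    rw [(dense_zsmul_irr θ hθ).closure_eq]; trivial
  exact ((mapClusterPt_atTop_nsmul_tfae c ((θ : ℝ) : AddCircle (1:ℝ))).out 3 0).mp hc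

/-- The key density lemma. -/
private lemma dense_tail (θ a : ℝ) (hθ : Irrational θ) (ha : a = 1 ∨ a = -1)
    (x y : AddCircle (1:ℝ)) (n : ℝ) :
    Dense {z : AddCircle (1:ℝ) × AddCircle (1:ℝ) |
      ∃ t : ℝ, n < t ∧ (x + ((a * t : ℝ) : AddCircle (1:ℝ)),
        y + ((θ * t : ℝ) : AddCircle (1:ℝ))) = z} := by
  intro q
  have haa : a * a = 1 := by rcases ha with h | h <;> rw [h] <;> ring
  obtain ⟨r, hr⟩ := pi_surj (q.1 - x)
  set s : ℝ := a * r with hs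
  have hq1 : x + ((a * s : ℝ) : AddCircle (1:ℝ)) = q.1 := by
    rw [hs, ← mul_assoc, haa, one_mul, hr]; abel
  set c : AddCircle (1:ℝ) := q.2 - (y + ((θ * s : ℝ) : AddCircle (1:ℝ))) with hc
  have hcl := clusterPt_nsmul θ hθ c
  have hcont : ContinuousAt
      (fun z : AddCircle (1:ℝ) => (q.1, y + ((θ * s : ℝ) : AddCircle (1:ℝ)) + z)) c := by
    fun_prop
  have hmap := hcl.continuousAt_comp hcont
  have hqeq : (q.1, y + ((θ * s : ℝ) : AddCircle (1:ℝ)) + c) = q := by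
    rw [hc]; ext <;> simp
  rw [hqeq] at hmap
  rw [mem_closure_iff_nhds]
  intro U hU
  have hfreq := mapClusterPt_iff_frequently.mp hmap U hU
  have hev : ∀ᶠ k : ℕ in atTop, n < s + (k : ℝ) := by
    have : Tendsto (fun k : ℕ => s + (k : ℝ)) atTop atTop :=
      tendsto_atTop_add_const_left _ _ tendsto_natCast_atTop_atTop
    exact this.eventually_gt_atTop n
  obtain ⟨k, hkU, hkn⟩ := (hfreq.and_eventually hev).exists
  refine ⟨_, hkU, s + (k : ℝ), hkn, ?_⟩
  simp only [Function.comp_apply]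
  have hak : ((a * (k:ℝ) : ℝ) : AddCircle (1:ℝ)) = 0 := by
    rw [AddCircle.coe_eq_zero_iff]
    rcases ha with h | h
    · exact ⟨(k : ℤ), by rw [h, zsmul_eq_mul]; push_cast; ring⟩
    · exact ⟨-(k : ℤ), by rw [h, zsmul_eq_mul]; push_cast; ring⟩
  have h1 : x + ((a * (s + (k:ℝ)) : ℝ) : AddCircle (1:ℝ)) = q.1 := by
    rw [mul_add, AddCircle.coe_add, hak, add_zero, hq1]
  have h2 : y + ((θ * (s + (k:ℝ)) : ℝ) : AddCircle (1:ℝ))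
      = y + ((θ * s : ℝ) : AddCircle (1:ℝ)) + k • ((θ:ℝ) : AddCircle (1:ℝ)) := by
    rw [mul_add, AddCircle.coe_add, add_assoc]
    congr 1
    congr 1
    rw [← AddCircle.coe_nsmul]
    congr 1
    ring
  rw [h1, h2]

end AuxIrrFlow

/-- The irrational linear flow `φ t (x, y) = (x + t, y + θ·t)` on the torus, with `θ`
irrational, has time-reversal symmetric limit sets; in fact `α(p) = ω(p) = 𝕋²` for every
point `p`. -/
theorem irrational_flow_hasSymmetricLimitSets
    (θ : ℝ) (hθ : Irrational θ) (φ : Flow ℝ Torus2)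
    (hφ : ∀ (t : ℝ) (p : Torus2),
      φ t p = (p.1 + (t : AddCircle (1:ℝ)), p.2 + ((θ * t : ℝ) : AddCircle (1:ℝ)))) :
    ∀ p : Torus2, φ.alphaSet p = φ.omegaSet p ∧ φ.omegaSet p = Set.univ := by
  intro p
  have hω : φ.omegaSet p = Set.univ := by
    rw [Flow.omegaSet, Set.iInter_eq_univ]
    intro n
    have hset : {y | ∃ t : ℝ, n < t ∧ φ t p = y} =
        {z : Torus2 | ∃ t : ℝ, n < t ∧ (p.1 + ((1 * t : ℝ) : AddCircle (1:ℝ)),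
          p.2 + ((θ * t : ℝ) : AddCircle (1:ℝ))) = z} := by
      ext z
      simp only [Set.mem_setOf_eq, hφ, one_mul]
    rw [hset]
    exact (dense_tail θ 1 hθ (Or.inl rfl) p.1 p.2 n).closure_eq
  have hα : φ.alphaSet p = Set.univ := by
    rw [Flow.alphaSet, Set.iInter_eq_univ]
    intro n
    have hset : {y | ∃ t : ℝ, t < n ∧ φ t p = y} =
        {z : Torus2 | ∃ u : ℝ, -n < u ∧ (p.1 + ((-1 * u : ℝ) : AddCircle (1:ℝ)),
          p.2 + ((-θ * u : ℝ) : AddCircle (1:ℝ))) = z} := by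
      ext z
      constructor
      · rintro ⟨t, ht, rfl⟩
        refine ⟨-t, by linarith, ?_⟩
        rw [hφ]
        norm_num
      · rintro ⟨u, hu, rfl⟩
        refine ⟨-u, by linarith, ?_⟩
        rw [hφ]
        norm_num
    rw [hset]
    exact (dense_tail (-θ) (-1) hθ.neg (Or.inr rfl) p.1 p.2 (-n)).closure_eq
  exact ⟨hα.trans hω.symm, hω⟩
end

section
/- Let S be a compact metric space, A ⊆ S a closed subset, T a connected component of the complement S \ A, and A₁, A₂ two distinct connected components of A. Then there exist disjoint open subsets U₁ and U₂ of S such that A₁ ⊆ U₁, A₂ ⊆ U₂, A ⊆ U₁ ∪ U₂, and the set difference T \ (U₁ ∪ U₂) is compact. -/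
open Set Topology

/-- Let `S` be a compact metric space, `A ⊆ S` a closed subset, `T` a connected component
of `S \ A`, and `A₁, A₂` two distinct connected components of `A`. Then there are
disjoint open sets `U₁ ⊇ A₁` and `U₂ ⊇ A₂` with `A ⊆ U₁ ∪ U₂` such that `T \ (U₁ ∪ U₂)`
is compact. -/
theorem distinct_components_separated_by_open_sets_compact_core
    {S : Type*} [MetricSpace S] [CompactSpace S]
    (A : Set S) (hA : IsClosed A)
    (T : Set S) (hT : ∃ x ∈ Aᶜ, connectedComponentIn Aᶜ x = T)
    (a₁ a₂ : S) (ha₁ : a₁ ∈ A) (ha₂ : a₂ ∈ A)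
    (hne : connectedComponentIn A a₁ ≠ connectedComponentIn A a₂) :
    ∃ U₁ U₂ : Set S, IsOpen U₁ ∧ IsOpen U₂ ∧ Disjoint U₁ U₂ ∧
      connectedComponentIn A a₁ ⊆ U₁ ∧ connectedComponentIn A a₂ ⊆ U₂ ∧
      A ⊆ U₁ ∪ U₂ ∧ IsCompact (T \ (U₁ ∪ U₂)) := by
  haveI : CompactSpace A := isCompact_iff_compactSpace.mp hA.isCompact
  set x₁ : A := ⟨a₁, ha₁⟩
  set x₂ : A := ⟨a₂, ha₂⟩
  -- the connected components of x₁ and x₂ in the subtype are distinct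
  have hne' : x₂ ∉ connectedComponent x₁ := by
    intro h
    apply hne
    rw [connectedComponentIn_eq_image ha₁, connectedComponentIn_eq_image ha₂,
      connectedComponent_eq h]
  -- find a clopen set separating them
  rw [connectedComponent_eq_iInter_isClopen x₁, mem_iInter] at hne'
  push_neg at hne'
  obtain ⟨⟨Z, hZclopen, hx₁Z⟩, hx₂Z⟩ := hne'
  simp only at hx₂Z
  -- the two compact pieces of A
  have hC₁ : IsCompact ((↑) '' Z : Set S) :=
    (hZclopen.isClosed.isCompact).image continuous_subtype_val
  have hC₂ : IsCompact ((↑) '' Zᶜ : Set S) :=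
    (hZclopen.compl.isClosed.isCompact).image continuous_subtype_val
  have hdisj : Disjoint ((↑) '' Z : Set S) ((↑) '' Zᶜ) := by
    rw [disjoint_iff_inter_eq_empty, ← image_inter Subtype.val_injective,
      inter_compl_self, image_empty]
  obtain ⟨U₁, U₂, hU₁, hU₂, hZU₁, hZU₂, hUdisj⟩ :=
    SeparatedNhds.of_isCompact_isCompact hC₁ hC₂ hdisj
  have hAU : A ⊆ U₁ ∪ U₂ := by
    intro a ha
    rcases Classical.em ((⟨a, ha⟩ : A) ∈ Z) with h | h
    · exact Or.inl (hZU₁ ⟨⟨a, ha⟩, h, rfl⟩)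
    · exact Or.inr (hZU₂ ⟨⟨a, ha⟩, h, rfl⟩)
  refine ⟨U₁, U₂, hU₁, hU₂, hUdisj, ?_, ?_, hAU, ?_⟩
  · rw [connectedComponentIn_eq_image ha₁]
    exact (image_mono (hZclopen.connectedComponent_subset hx₁Z)).trans hZU₁
  · rw [connectedComponentIn_eq_image ha₂]
    exact (image_mono (hZclopen.compl.connectedComponent_subset hx₂Z)).trans hZU₂
  · -- T \ (U₁ ∪ U₂) is closed, hence compact
    obtain ⟨x, hx, rfl⟩ := hT
    have hclosure : closure (connectedComponentIn Aᶜ x) ∩ Aᶜ ⊆ connectedComponentIn Aᶜ x := by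
      rw [connectedComponentIn_eq_image hx]
      rintro y ⟨hy, hyA⟩
      have : (⟨y, hyA⟩ : ↥Aᶜ) ∈ closure (connectedComponent (⟨x, hx⟩ : ↥Aᶜ)) := by
        rw [closure_subtype]
        exact hy
      rw [isClosed_connectedComponent.closure_eq] at this
      exact ⟨_, this, rfl⟩
    have heq : connectedComponentIn Aᶜ x \ (U₁ ∪ U₂)
        = closure (connectedComponentIn Aᶜ x) \ (U₁ ∪ U₂) := by
      apply Subset.antisymm (diff_subset_diff_left subset_closure)
      rintro y ⟨hy, hyU⟩
      have hyA : y ∈ Aᶜ := fun h => hyU (hAU h)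
      exact ⟨hclosure ⟨hy, hyA⟩, hyU⟩
    rw [heq]
    exact (isClosed_closure.sdiff (hU₁.union hU₂)).isCompact
end
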